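/- Let U, V ∈ ℝ^{n×d}, f : ℝ → ℝ, and let X, f⃗, W be as in Definition (Vandermonde/regularizer). Then for every coefficient vector c = (c_0,…,c_r) ∈ ℝ^{r+1}, the Poly-TensorSketch output Γ with coefficients c satisfies E[ ‖f⊙(UVᵀ) − Γ‖_F² ] ≤ 2 ‖X c − f⃗‖_2² + 2 ‖W c‖_2². -/

import Mathlib

open Matrix
open scoped BigOperators

noncomputable section

def sgn (b : Bool) : ℝ := if b then 1 else -1

def tSketch {d m : ℕ} [NeZero m] (k : ℕ) (h : Fin k → Fin d → Fin m)
    (s : Fin k → Fin d → Bool) (u : Fin d → ℝ) : Fin m → ℝ :=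
  fun j => ∑ i : Fin k → Fin d,
    if (∑ t, h t (i t)) = j then ∏ t, (sgn (s t (i t)) * u (i t)) else 0

def tSketchM {n d m : ℕ} [NeZero m] (k : ℕ) (h : Fin k → Fin d → Fin m)
    (s : Fin k → Fin d → Bool) (U : Matrix (Fin n) (Fin d) ℝ) :
    Matrix (Fin n) (Fin m) ℝ :=
  Matrix.of fun i => tSketch k h s (U i)

def frobSq {α β : Type*} [Fintype α] [Fintype β] (A : Matrix α β ℝ) : ℝ :=
  ∑ i, ∑ j, (A i j)^2

def expHS {k d m : ℕ}
    (F : (Fin k → Fin d → Fin m) → (Fin k → Fin d → Bool) → ℝ) : ℝ :=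
  (∑ h : Fin k → Fin d → Fin m, ∑ s : Fin k → Fin d → Bool, F h s) /
    ((Fintype.card (Fin k → Fin d → Fin m)) * (Fintype.card (Fin k → Fin d → Bool)))

/-- Output of Poly-TensorSketch: `Γ = Σ_{j=0}^r c_j T_U^{(j)} T_V^{(j)ᵀ}`,
where `T_U^{(j)}` is built from `h 0, …, h (j-1)` and `s 0, …, s (j-1)`. -/
def ptsGamma {n d m : ℕ} [NeZero m] (r : ℕ) (c : Fin (r + 1) → ℝ)
    (h : Fin r → Fin d → Fin m) (s : Fin r → Fin d → Bool)
    (U V : Matrix (Fin n) (Fin d) ℝ) : Matrix (Fin n) (Fin n) ℝ :=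
  ∑ j : Fin (r + 1),
    c j • (tSketchM (j : ℕ)
        (fun t => h ⟨t.1, lt_of_lt_of_le t.2 (Nat.lt_succ_iff.mp j.2)⟩)
        (fun t => s ⟨t.1, lt_of_lt_of_le t.2 (Nat.lt_succ_iff.mp j.2)⟩) U
      * (tSketchM (j : ℕ)
        (fun t => h ⟨t.1, lt_of_lt_of_le t.2 (Nat.lt_succ_iff.mp j.2)⟩)
        (fun t => s ⟨t.1, lt_of_lt_of_le t.2 (Nat.lt_succ_iff.mp j.2)⟩) V)ᵀ)

/-- Squared Euclidean norm of a real vector. -/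
def vnormSq {ι : Type*} [Fintype ι] (x : ι → ℝ) : ℝ := ∑ i, (x i) ^ 2

/-- The Vandermonde matrix `X ∈ ℝ^{n²×(r+1)}` whose `ℓ`-th column is the
vectorization of the entrywise power matrix `[((UVᵀ)_{ij})^ℓ]`. -/
def vand {n d : ℕ} (r : ℕ) (U V : Matrix (Fin n) (Fin d) ℝ) :
    Matrix (Fin n × Fin n) (Fin (r + 1)) ℝ :=
  Matrix.of fun p ℓ => ((U * Vᵀ) p.1 p.2) ^ (ℓ : ℕ)

/-- The vectorization `f⃗ ∈ ℝ^{n²}` of `f⊙(UVᵀ)`. -/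
def fvec {n d : ℕ} (f : ℝ → ℝ) (U V : Matrix (Fin n) (Fin d) ℝ) :
    Fin n × Fin n → ℝ :=
  fun p => f ((U * Vᵀ) p.1 p.2)

/-- Diagonal entries of the regularizer `W`: `W_{00} = 0` and
`W_{jj} = sqrt( r(2+3^j)(Σ_i(Σ_k U_{ik}²)^j)(Σ_i(Σ_k V_{ik}²)^j)/m )` for `j ≥ 1`. -/
def wReg {n d : ℕ} (r m : ℕ) (U V : Matrix (Fin n) (Fin d) ℝ) :
    Fin (r + 1) → ℝ :=
  fun ℓ => if (ℓ : ℕ) = 0 then 0 else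
    Real.sqrt ((r : ℝ) * (2 + 3 ^ (ℓ : ℕ))
      * (∑ i, (∑ l, (U i l) ^ 2) ^ (ℓ : ℕ))
      * (∑ i, (∑ l, (V i l) ^ 2) ^ (ℓ : ℕ)) / m)

open Finset
set_option maxHeartbeats 1600000

lemma sgn_mul_self (b : Bool) : sgn b * sgn b = 1 := by cases b <;> simp [sgn]

lemma sgn_not (b : Bool) : sgn (!b) = - sgn b := by cases b <;> simp [sgn]

lemma sum_flip_zero {d : ℕ} (x : Fin d) (F : (Fin d → Bool) → ℝ)
    (hF : ∀ σ, F (Function.update σ x (!σ x)) = - F σ) : ∑ σ, F σ = 0 := by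
  have hinv : Function.Involutive (fun σ : Fin d → Bool => Function.update σ x (!σ x)) := by
    intro σ
    funext y
    by_cases hy : y = x
    · subst hy; simp [Function.update_apply]
    · simp [Function.update_apply, hy]
  have h2 : ∑ σ, F (Function.update σ x (!σ x)) = ∑ σ, F σ := Equiv.sum_comp hinv.toPerm F
  rw [Finset.sum_congr rfl (fun σ _ => hF σ)] at h2
  simp only [Finset.sum_neg_distrib] at h2
  linarith

lemma sgn_update {d : ℕ} (σ : Fin d → Bool) (x y : Fin d) :
    sgn ((Function.update σ x (!σ x)) y) = if y = x then - sgn (σ y) else sgn (σ y) := by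
  by_cases hy : y = x
  · subst hy; simp [Function.update_apply, sgn_not]
  · simp [Function.update_apply, hy]

lemma sum_sgn_quad {d : ℕ} (a b c e : Fin d) :
    ∑ σ : Fin d → Bool, sgn (σ a) * sgn (σ b) * sgn (σ c) * sgn (σ e)
    = if (a = b ∧ c = e) ∨ (a = c ∧ b = e) ∨ (a = e ∧ b = c)
      then (Fintype.card (Fin d → Bool) : ℝ) else 0 := by
  by_cases H : (a = b ∧ c = e) ∨ (a = c ∧ b = e) ∨ (a = e ∧ b = c)
  · rw [if_pos H]
    have h1 : ∀ σ : Fin d → Bool, sgn (σ a) * sgn (σ b) * sgn (σ c) * sgn (σ e) = 1 := by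
      intro σ
      rcases H with ⟨h1, h2⟩ | ⟨h1, h2⟩ | ⟨h1, h2⟩ <;> subst h1 <;> subst h2
      · rw [sgn_mul_self, one_mul, sgn_mul_self]
      · have : sgn (σ a) * sgn (σ b) * sgn (σ a) * sgn (σ b)
            = (sgn (σ a) * sgn (σ a)) * (sgn (σ b) * sgn (σ b)) := by ring
        rw [this, sgn_mul_self, sgn_mul_self, one_mul]
      · have : sgn (σ a) * sgn (σ b) * sgn (σ b) * sgn (σ a)
            = (sgn (σ a) * sgn (σ a)) * (sgn (σ b) * sgn (σ b)) := by ring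
        rw [this, sgn_mul_self, sgn_mul_self, one_mul]
    rw [Finset.sum_congr rfl (fun σ _ => h1 σ)]
    simp
  · rw [if_neg H]
    push_neg at H
    obtain ⟨hP, hQ, hR⟩ := H
    by_cases hab : a = b
    · -- c ≠ e; flip at c
      have hce : c ≠ e := hP hab
      subst hab
      by_cases hac : a = c
      · subst hac
        refine sum_flip_zero a _ (fun σ => ?_)
        simp [sgn_update, sgn_not, Ne.symm hce]
      · refine sum_flip_zero c _ (fun σ => ?_)
        simp [sgn_update, sgn_not, Ne.symm hce, hac]
    · by_cases hac : a = c
      · -- b ≠ e; flip at b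
        have hbe : b ≠ e := hQ hac
        subst hac
        refine sum_flip_zero b _ (fun σ => ?_)
        have hba : b ≠ a := fun h => hab h.symm
        simp [sgn_update, sgn_not, hab, Ne.symm hbe]
      · by_cases hae : a = e
        · -- b ≠ c; flip at b
          have hbc : b ≠ c := hR hae
          subst hae
          refine sum_flip_zero b _ (fun σ => ?_)
          have hba : b ≠ a := fun h => hab h.symm
          simp [sgn_update, sgn_not, hab, Ne.symm hbc]
        · -- flip at a
          refine sum_flip_zero a _ (fun σ => ?_)
          simp [sgn_update, sgn_not, Ne.symm hab, Ne.symm hac, Ne.symm hae]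

lemma sum_chi {k d mm : ℕ} [NeZero mm] {α β : Fin k → Fin d} (hne : α ≠ β) :
    ∑ h : Fin k → Fin d → Fin mm,
      (if (∑ t, h t (α t)) = (∑ t, h t (β t)) then (1:ℝ) else 0)
    = (Fintype.card (Fin k → Fin d → Fin mm) : ℝ) / mm := by
  obtain ⟨t0, ht0⟩ := Function.ne_iff.mp hne
  set Φ : Fin mm → (Fin k → Fin d → Fin mm) → (Fin k → Fin d → Fin mm) :=
    fun z h => fun t x => if t = t0 ∧ x = α t0 then h t x + z else h t x with hΦ
  have hbij : ∀ z, Function.Bijective (Φ z) := by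
    intro z
    apply Function.bijective_iff_has_inverse.mpr
    refine ⟨Φ (-z), fun h => ?_, fun h => ?_⟩ <;>
    · funext t x
      by_cases hc : t = t0 ∧ x = α t0 <;> simp [hΦ, hc]
  have key : ∀ z : Fin mm,
      (∑ h : Fin k → Fin d → Fin mm,
        (if (∑ t, h t (α t)) = (∑ t, h t (β t)) then (1:ℝ) else 0))
      = ∑ h : Fin k → Fin d → Fin mm,
        (if (∑ t, h t (α t)) + z = (∑ t, h t (β t)) then (1:ℝ) else 0) := by
    intro z
    rw [← Function.Bijective.sum_comp (hbij z)
      (fun h => if (∑ t, h t (α t)) = (∑ t, h t (β t)) then (1:ℝ) else 0)]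
    apply Finset.sum_congr rfl
    intro h _
    have hA : ∑ t, (Φ z h) t (α t) = (∑ t, h t (α t)) + z := by
      have : ∀ t, (Φ z h) t (α t) = h t (α t) + (if t = t0 then z else 0) := by
        intro t
        by_cases ht : t = t0
        · subst ht; simp [hΦ]
        · simp [hΦ, ht]
      rw [Finset.sum_congr rfl (fun t _ => this t), Finset.sum_add_distrib,
        Finset.sum_ite_eq' univ t0 (fun _ => z)]
      simp
    have hB : ∑ t, (Φ z h) t (β t) = ∑ t, h t (β t) := by
      apply Finset.sum_congr rfl
      intro t _
      by_cases ht : t = t0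
      · subst ht; simp [hΦ, Ne.symm ht0]
      · simp [hΦ, ht]
    rw [hA, hB]
  have big : (mm : ℝ) * (∑ h : Fin k → Fin d → Fin mm,
      (if (∑ t, h t (α t)) = (∑ t, h t (β t)) then (1:ℝ) else 0))
      = Fintype.card (Fin k → Fin d → Fin mm) := by
    calc (mm : ℝ) * _ = ∑ _z : Fin mm, (∑ h : Fin k → Fin d → Fin mm,
          (if (∑ t, h t (α t)) = (∑ t, h t (β t)) then (1:ℝ) else 0)) := by
            rw [Finset.sum_const]; simp [mul_comm]
      _ = ∑ z : Fin mm, ∑ h : Fin k → Fin d → Fin mm,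
          (if (∑ t, h t (α t)) + z = (∑ t, h t (β t)) then (1:ℝ) else 0) := by
            exact Finset.sum_congr rfl (fun z _ => key z)
      _ = ∑ h : Fin k → Fin d → Fin mm, ∑ z : Fin mm,
          (if z = (∑ t, h t (β t)) - (∑ t, h t (α t)) then (1:ℝ) else 0) := by
            rw [Finset.sum_comm]
            refine Finset.sum_congr rfl (fun h _ => Finset.sum_congr rfl (fun z _ => ?_))
            congr 1
            simp [eq_sub_iff_add_eq, eq_iff_iff]
            constructor <;> intro hh <;> rw [add_comm] <;> exact hh
      _ = ∑ _h : Fin k → Fin d → Fin mm, (1:ℝ) := by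
            refine Finset.sum_congr rfl (fun h _ => ?_)
            rw [Finset.sum_ite_eq' univ _ (fun _ => (1:ℝ))]
            simp
      _ = Fintype.card (Fin k → Fin d → Fin mm) := by simp
  have hmm : (mm : ℝ) ≠ 0 := Nat.cast_ne_zero.mpr (NeZero.ne mm)
  rw [eq_div_iff hmm]
  linarith [big]

lemma sum_prefix {A : Type*} [Fintype A] {r k : ℕ} (hk : k ≤ r) (g : (Fin k → A) → ℝ) :
    ∑ x : Fin r → A, g (fun t => x (Fin.castLE hk t))
    = (Fintype.card (Fin (r - k) → A)) * ∑ y : Fin k → A, g y := by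
  have hadd : k + (r - k) = r := Nat.add_sub_cancel' hk
  let e1 : (Fin k ⊕ Fin (r - k)) ≃ Fin r := finSumFinEquiv.trans (finCongr hadd)
  let E : ((Fin k → A) × (Fin (r - k) → A)) ≃ (Fin r → A) :=
    (Equiv.sumArrowEquivProdArrow (Fin k) (Fin (r - k)) A).symm.trans
      (Equiv.arrowCongr e1 (Equiv.refl A))
  have hres : ∀ (p : (Fin k → A) × (Fin (r - k) → A)) (t : Fin k),
      E p (Fin.castLE hk t) = p.1 t := by
    intro p t
    have h1 : e1.symm (Fin.castLE hk t) = Sum.inl t := by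
      rw [Equiv.symm_apply_eq]
      apply Fin.ext
      simp [e1]
    show (Equiv.arrowCongr e1 (Equiv.refl A)) _ (Fin.castLE hk t) = p.1 t
    simp only [Equiv.arrowCongr_apply, Function.comp_apply, h1]
    rfl
  rw [← Equiv.sum_comp E (fun x => g (fun t => x (Fin.castLE hk t)))]
  rw [Fintype.sum_prod_type_right]
  have : ∀ (z : Fin (r - k) → A) (y : Fin k → A),
      g (fun t => E (y, z) (Fin.castLE hk t)) = g y := by
    intro z y; congr 1; funext t; exact hres (y, z) t
  calc ∑ z : Fin (r-k) → A, ∑ y : Fin k → A, g (fun t => E (y, z) (Fin.castLE hk t))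
      = ∑ _z : Fin (r-k) → A, ∑ y : Fin k → A, g y := by
        exact Finset.sum_congr rfl (fun z _ => Finset.sum_congr rfl (fun y _ => this z y))
    _ = (Fintype.card (Fin (r - k) → A)) * ∑ y : Fin k → A, g y := by
        rw [Finset.sum_const]; simp


-- helper A
lemma sum_ite_mul_ite {M : Type*} [Fintype M] [DecidableEq M] (a b : M) (X Z : ℝ) :
    ∑ q : M, (if a = q then X else 0) * (if b = q then Z else 0)
    = (if a = b then (1:ℝ) else 0) * (X * Z) := by
  by_cases hab : a = b
  · subst hab
    rw [if_pos rfl, one_mul]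
    have : ∀ q : M, (if a = q then X else 0) * (if a = q then Z else 0)
        = if a = q then X * Z else 0 := by
      intro q; by_cases h : a = q <;> simp [h]
    rw [Finset.sum_congr rfl (fun q _ => this q), Finset.sum_ite_eq univ a (fun _ => X * Z)]
    simp
  · rw [if_neg hab, zero_mul]
    apply Finset.sum_eq_zero
    intro q _
    by_cases h : a = q
    · subst h
      rw [if_neg (fun hba : b = a => hab hba.symm), mul_zero]
    · rw [if_neg h, zero_mul]

-- helper B : expansion of the sketch inner product
lemma tSketch_inner {k d mm : ℕ} [NeZero mm] (h : Fin k → Fin d → Fin mm)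
    (s : Fin k → Fin d → Bool) (u v : Fin d → ℝ) :
    ∑ q : Fin mm, tSketch k h s u q * tSketch k h s v q
    = ∑ α : Fin k → Fin d, ∑ β : Fin k → Fin d,
        (if (∑ t, h t (α t)) = (∑ t, h t (β t)) then (1:ℝ) else 0)
        * ((∏ t, (sgn (s t (α t)) * u (α t))) * (∏ t, (sgn (s t (β t)) * v (β t)))) := by
  unfold tSketch
  have h1 : ∀ q : Fin mm,
      (∑ α : Fin k → Fin d, if (∑ t, h t (α t)) = q then ∏ t, (sgn (s t (α t)) * u (α t)) else 0)
      * (∑ β : Fin k → Fin d, if (∑ t, h t (β t)) = q then ∏ t, (sgn (s t (β t)) * v (β t)) else 0)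
      = ∑ α : Fin k → Fin d, ∑ β : Fin k → Fin d,
        (if (∑ t, h t (α t)) = q then ∏ t, (sgn (s t (α t)) * u (α t)) else 0)
        * (if (∑ t, h t (β t)) = q then ∏ t, (sgn (s t (β t)) * v (β t)) else 0) :=
    fun q => Finset.sum_mul_sum _ _ _ _
  rw [Finset.sum_congr rfl (fun q _ => h1 q)]
  rw [Finset.sum_comm]
  apply Finset.sum_congr rfl
  intro α _
  rw [Finset.sum_comm]
  apply Finset.sum_congr rfl
  intro β _
  exact sum_ite_mul_ite _ _ _ _

-- helper C : diagonal sum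
lemma diag_sum {k d : ℕ} (s : Fin k → Fin d → Bool) (u v : Fin d → ℝ) :
    ∑ α : Fin k → Fin d,
      (∏ t, (sgn (s t (α t)) * u (α t))) * (∏ t, (sgn (s t (α t)) * v (α t)))
    = (∑ l, u l * v l) ^ k := by
  have h1 : ∀ α : Fin k → Fin d,
      (∏ t, (sgn (s t (α t)) * u (α t))) * (∏ t, (sgn (s t (α t)) * v (α t)))
      = ∏ t, (u (α t) * v (α t)) := by
    intro α
    rw [← Finset.prod_mul_distrib]
    apply Finset.prod_congr rfl
    intro t _
    have : (sgn (s t (α t)) * u (α t)) * (sgn (s t (α t)) * v (α t))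
        = (sgn (s t (α t)) * sgn (s t (α t))) * (u (α t) * v (α t)) := by ring
    rw [this, sgn_mul_self, one_mul]
  rw [Finset.sum_congr rfl (fun α _ => h1 α), Fintype.sum_pow]

-- helper D
lemma sum_sigma_quad {k d : ℕ} (α β γ δ : Fin k → Fin d) :
    ∑ s : Fin k → Fin d → Bool,
      (∏ t, sgn (s t (α t))) * (∏ t, sgn (s t (β t)))
      * (∏ t, sgn (s t (γ t))) * (∏ t, sgn (s t (δ t)))
    = ∏ t, (∑ σ : Fin d → Bool,
        sgn (σ (α t)) * sgn (σ (β t)) * sgn (σ (γ t)) * sgn (σ (δ t))) := by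
  rw [Fintype.prod_sum (fun t (σ : Fin d → Bool) =>
    sgn (σ (α t)) * sgn (σ (β t)) * sgn (σ (γ t)) * sgn (σ (δ t)))]
  apply Finset.sum_congr rfl
  intro s _
  rw [← Finset.prod_mul_distrib, ← Finset.prod_mul_distrib, ← Finset.prod_mul_distrib]

-- helper E
lemma sum_arrow_prod {k : ℕ} {A B : Type*} [Fintype A] [Fintype B]
    (w : Fin k → A × B → ℝ) :
    ∑ p : Fin k → A × B, ∏ t, w t (p t)
    = ∑ a : Fin k → A, ∑ b : Fin k → B, ∏ t, w t (a t, b t) := by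
  rw [← Equiv.sum_comp (Equiv.arrowProdEquivProdArrow (Fin k) (fun _ => A) (fun _ => B)).symm
    (fun p : Fin k → A × B => ∏ t, w t (p t))]
  rw [Fintype.sum_prod_type]
  rfl

lemma sum4_prod {k d : ℕ} (w : Fin d → Fin d → Fin d → Fin d → ℝ) :
    ∑ α : Fin k → Fin d, ∑ β : Fin k → Fin d, ∑ γ : Fin k → Fin d, ∑ δ : Fin k → Fin d,
      ∏ t, w (α t) (β t) (γ t) (δ t)
    = (∑ a, ∑ b, ∑ c, ∑ e, w a b c e) ^ k := by
  have h1 : (∑ a, ∑ b, ∑ c, ∑ e, w a b c e)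
      = ∑ q : Fin d × Fin d × Fin d × Fin d, w q.1 q.2.1 q.2.2.1 q.2.2.2 := by
    simp only [Fintype.sum_prod_type]
  symm
  calc (∑ a, ∑ b, ∑ c, ∑ e, w a b c e) ^ k
      = ∑ p : Fin k → Fin d × Fin d × Fin d × Fin d,
          ∏ t, w (p t).1 (p t).2.1 (p t).2.2.1 (p t).2.2.2 := by
        rw [h1]; exact Fintype.sum_pow _ k
    _ = ∑ α : Fin k → Fin d, ∑ p : Fin k → Fin d × Fin d × Fin d,
          ∏ t, w (α t) (p t).1 (p t).2.1 (p t).2.2 :=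
        sum_arrow_prod (A := Fin d) (B := Fin d × Fin d × Fin d) (fun _ q => w q.1 q.2.1 q.2.2.1 q.2.2.2)
    _ = ∑ α : Fin k → Fin d, ∑ β : Fin k → Fin d, ∑ p : Fin k → Fin d × Fin d,
          ∏ t, w (α t) (β t) (p t).1 (p t).2 :=
        Finset.sum_congr rfl (fun α _ => sum_arrow_prod (A := Fin d) (B := Fin d × Fin d) (fun t q => w (α t) q.1 q.2.1 q.2.2))
    _ = ∑ α : Fin k → Fin d, ∑ β : Fin k → Fin d, ∑ γ : Fin k → Fin d, ∑ δ : Fin k → Fin d,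
          ∏ t, w (α t) (β t) (γ t) (δ t) :=
        Finset.sum_congr rfl (fun α _ => Finset.sum_congr rfl
          (fun β _ => sum_arrow_prod (A := Fin d) (B := Fin d) (fun t q => w (α t) (β t) q.1 q.2)))

lemma base_bound {d : ℕ} (u v : Fin d → ℝ) (CB : ℝ) (hCB : 0 ≤ CB) :
    ∑ a, ∑ b, ∑ c, ∑ e, (|u a| * |v b| * |u c| * |v e|)
      * (if (a = b ∧ c = e) ∨ (a = c ∧ b = e) ∨ (a = e ∧ b = c) then CB else 0)
    ≤ CB * (3 * ((∑ l, (u l)^2) * (∑ l, (v l)^2))) := by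
  have hI1 : ∑ a, ∑ b, ∑ c, ∑ e, (|u a| * |v b| * |u c| * |v e|)
      * (if a = b ∧ c = e then (1:ℝ) else 0)
      = (∑ l, |u l| * |v l|) * (∑ l, |u l| * |v l|) := by
    simp only [ite_and, mul_ite, mul_one, mul_zero, Finset.sum_ite_irrel,
      Finset.sum_const_zero, Finset.sum_ite_eq, Finset.mem_univ, if_true]
    rw [Finset.sum_mul_sum]
    exact Finset.sum_congr rfl (fun a _ => Finset.sum_congr rfl (fun c _ => by ring))
  have hI2 : ∑ a, ∑ b, ∑ c, ∑ e, (|u a| * |v b| * |u c| * |v e|)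
      * (if a = c ∧ b = e then (1:ℝ) else 0)
      = (∑ l, (u l)^2) * (∑ l, (v l)^2) := by
    simp only [ite_and, mul_ite, mul_one, mul_zero, Finset.sum_ite_irrel,
      Finset.sum_const_zero, Finset.sum_ite_eq, Finset.mem_univ, if_true]
    rw [Finset.sum_mul_sum]
    refine Finset.sum_congr rfl (fun a _ => Finset.sum_congr rfl (fun b _ => ?_))
    rw [← sq_abs (u a), ← sq_abs (v b)]; ring
  have hI3 : ∑ a, ∑ b, ∑ c, ∑ e, (|u a| * |v b| * |u c| * |v e|)
      * (if a = e ∧ b = c then (1:ℝ) else 0)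
      = (∑ l, |u l| * |v l|) * (∑ l, |u l| * |v l|) := by
    simp only [ite_and, mul_ite, mul_one, mul_zero, Finset.sum_ite_irrel,
      Finset.sum_const_zero, Finset.sum_ite_eq, Finset.mem_univ, if_true]
    rw [Finset.sum_mul_sum]
    exact Finset.sum_congr rfl (fun a _ => Finset.sum_congr rfl (fun b _ => by ring))
  have cs : (∑ l, |u l| * |v l|) * (∑ l, |u l| * |v l|)
      ≤ (∑ l, (u l)^2) * (∑ l, (v l)^2) := by
    have h := Finset.sum_mul_sq_le_sq_mul_sq univ (fun l => |u l|) (fun l => |v l|)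
    simpa [sq, sq_abs] using h
  have step : ∑ a, ∑ b, ∑ c, ∑ e, (|u a| * |v b| * |u c| * |v e|)
      * (if (a = b ∧ c = e) ∨ (a = c ∧ b = e) ∨ (a = e ∧ b = c) then CB else 0)
      ≤ CB * ((∑ a, ∑ b, ∑ c, ∑ e, (|u a| * |v b| * |u c| * |v e|)
          * (if a = b ∧ c = e then (1:ℝ) else 0))
        + (∑ a, ∑ b, ∑ c, ∑ e, (|u a| * |v b| * |u c| * |v e|)
          * (if a = c ∧ b = e then (1:ℝ) else 0))
        + (∑ a, ∑ b, ∑ c, ∑ e, (|u a| * |v b| * |u c| * |v e|)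
          * (if a = e ∧ b = c then (1:ℝ) else 0))) := by
    simp only [Finset.mul_sum, ← Finset.sum_add_distrib]
    apply Finset.sum_le_sum; intro a _
    apply Finset.sum_le_sum; intro b _
    apply Finset.sum_le_sum; intro c _
    apply Finset.sum_le_sum; intro e _
    have hw : (0:ℝ) ≤ |u a| * |v b| * |u c| * |v e| := by positivity
    have key : (if (a = b ∧ c = e) ∨ (a = c ∧ b = e) ∨ (a = e ∧ b = c) then CB else 0)
        ≤ CB * ((if a = b ∧ c = e then (1:ℝ) else 0) + (if a = c ∧ b = e then (1:ℝ) else 0)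
          + (if a = e ∧ b = c then (1:ℝ) else 0)) := by
      split_ifs <;> first | linarith | (exfalso; tauto)
    exact le_trans (mul_le_mul_of_nonneg_left key hw) (le_of_eq (by ring))
  calc _ ≤ _ := step
    _ ≤ CB * (3 * ((∑ l, (u l)^2) * (∑ l, (v l)^2))) := by
        rw [hI1, hI2, hI3]
        have h1 : (0:ℝ) ≤ (∑ l, (u l)^2) * (∑ l, (v l)^2) := by positivity
        nlinarith [cs, hCB, h1]

lemma sum_sgn_quad' {d : ℕ} (a b c e : Fin d) :
    ∑ σ : Fin d → Bool, sgn (σ a) * sgn (σ b) * sgn (σ c) * sgn (σ e)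
    = if (a = b ∧ c = e) ∨ (a = c ∧ b = e) ∨ (a = e ∧ b = c)
      then (Fintype.card (Fin d → Bool) : ℝ) else 0 := sum_sgn_quad a b c e

lemma core {k d mm : ℕ} [NeZero mm] (u v : Fin d → ℝ) :
    ∑ h : Fin k → Fin d → Fin mm, ∑ s : Fin k → Fin d → Bool,
      ((∑ l, u l * v l) ^ k - ∑ q : Fin mm, tSketch k h s u q * tSketch k h s v q) ^ 2
    ≤ (Fintype.card (Fin k → Fin d → Fin mm) : ℝ)
        * (Fintype.card (Fin k → Fin d → Bool))
        * (3 ^ k * (∑ l, (u l)^2) ^ k * (∑ l, (v l)^2) ^ k) / mm := by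
  classical
  set O : Finset ((Fin k → Fin d) × (Fin k → Fin d)) :=
    univ.filter (fun pr => pr.1 ≠ pr.2) with hO
  set G : (Fin k → Fin d → Fin mm) → (Fin k → Fin d → Bool)
      → ((Fin k → Fin d) × (Fin k → Fin d)) → ℝ :=
    fun h s pr => (if (∑ t, h t (pr.1 t)) = (∑ t, h t (pr.2 t)) then (1:ℝ) else 0)
      * ((∏ t, (sgn (s t (pr.1 t)) * u (pr.1 t)))
        * (∏ t, (sgn (s t (pr.2 t)) * v (pr.2 t)))) with hG
  -- Step 1: p - Y = - sum over offdiagonal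
  have hsplit : ∀ h s,
      (∑ l, u l * v l) ^ k - (∑ q : Fin mm, tSketch k h s u q * tSketch k h s v q)
      = - ∑ pr ∈ O, G h s pr := by
    intro h s
    rw [tSketch_inner]
    have hY : (∑ α : Fin k → Fin d, ∑ β : Fin k → Fin d,
        (if (∑ t, h t (α t)) = (∑ t, h t (β t)) then (1:ℝ) else 0)
        * ((∏ t, (sgn (s t (α t)) * u (α t))) * (∏ t, (sgn (s t (β t)) * v (β t)))))
        = ∑ pr : (Fin k → Fin d) × (Fin k → Fin d), G h s pr :=
      by exact (Fintype.sum_prod_type (f := fun pr => G h s pr)).symm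
    have hfull := Finset.sum_filter_add_sum_filter_not
      (univ : Finset ((Fin k → Fin d) × (Fin k → Fin d))) (fun pr => pr.1 = pr.2) (G h s)
    rw [hY, ← hfull]
    have hdiag : ∑ pr ∈ univ.filter
        (fun pr : (Fin k → Fin d) × (Fin k → Fin d) => pr.1 = pr.2), G h s pr
        = (∑ l, u l * v l) ^ k := by
      rw [Finset.sum_filter, Fintype.sum_prod_type]
      have h1 : ∀ α : Fin k → Fin d,
          (∑ β : Fin k → Fin d, if (α, β).1 = (α, β).2 then G h s (α, β) else 0)
          = G h s (α, α) := by
        intro α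
        simp only []
        rw [Finset.sum_ite_eq univ α (fun β => G h s (α, β))]
        simp
      rw [Finset.sum_congr rfl (fun α _ => h1 α)]
      have h2 : ∀ α : Fin k → Fin d, G h s (α, α)
          = (∏ t, (sgn (s t (α t)) * u (α t))) * (∏ t, (sgn (s t (α t)) * v (α t))) := by
        intro α
        rw [hG]
        simp
      rw [Finset.sum_congr rfl (fun α _ => h2 α)]
      exact diag_sum s u v
    have hnot : (univ.filter (fun pr : (Fin k → Fin d) × (Fin k → Fin d) => ¬ pr.1 = pr.2)) = O := by
      rw [hO]
    rw [hnot, hdiag]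
    ring
  
  -- abbreviations
  have CHpos : (0:ℝ) ≤ (Fintype.card (Fin k → Fin d → Fin mm) : ℝ) / mm := by positivity
  -- Step 2: expand square
  have hsq : ∀ h s,
      ((∑ l, u l * v l) ^ k - ∑ q : Fin mm, tSketch k h s u q * tSketch k h s v q) ^ 2
      = ∑ pr ∈ O, ∑ qr ∈ O, G h s pr * G h s qr := by
    intro h s
    rw [hsplit h s, neg_sq, sq, Finset.sum_mul_sum]
  -- the absolute weight
  set w4 : Fin d → Fin d → Fin d → Fin d → ℝ := fun a b c e =>
    (|u a| * |v b| * |u c| * |v e|)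
    * (if (a = b ∧ c = e) ∨ (a = c ∧ b = e) ∨ (a = e ∧ b = c)
        then (Fintype.card (Fin d → Bool) : ℝ) else 0) with hw4
  have hw4nn : ∀ a b c e, 0 ≤ w4 a b c e := by
    intro a b c e
    rw [hw4]
    have : (0:ℝ) ≤ (if (a = b ∧ c = e) ∨ (a = c ∧ b = e) ∨ (a = e ∧ b = c)
        then (Fintype.card (Fin d → Bool) : ℝ) else 0) := by positivity
    positivity
  -- Step 3: the inner (h,s)-sum evaluation/bound
  have hinner : ∀ pr ∈ O, ∀ qr ∈ O,
      (∑ h : Fin k → Fin d → Fin mm, ∑ s : Fin k → Fin d → Bool, G h s pr * G h s qr)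
      ≤ ((Fintype.card (Fin k → Fin d → Fin mm) : ℝ) / mm)
        * ∏ t, w4 (pr.1 t) (pr.2 t) (qr.1 t) (qr.2 t) := by
    rintro ⟨α, β⟩ hpr ⟨γ, δ⟩ hqr
    have hne : α ≠ β := by simpa [hO] using hpr
    -- factor into an h-part and an s-part
    have hfact : (∑ h : Fin k → Fin d → Fin mm, ∑ s : Fin k → Fin d → Bool,
        G h s (α, β) * G h s (γ, δ))
        = (∑ h : Fin k → Fin d → Fin mm,
            (if (∑ t, h t (α t)) = (∑ t, h t (β t)) then (1:ℝ) else 0)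
            * (if (∑ t, h t (γ t)) = (∑ t, h t (δ t)) then (1:ℝ) else 0))
          * (∑ s : Fin k → Fin d → Bool,
            (∏ t, (sgn (s t (α t)) * u (α t))) * (∏ t, (sgn (s t (β t)) * v (β t)))
            * (∏ t, (sgn (s t (γ t)) * u (γ t))) * (∏ t, (sgn (s t (δ t)) * v (δ t)))) := by
      rw [Finset.sum_mul_sum]
      apply Finset.sum_congr rfl; intro h _
      apply Finset.sum_congr rfl; intro s _
      rw [hG]; ring
    rw [hfact]
    -- the sign part
    have hsig : (∑ s : Fin k → Fin d → Bool,
        (∏ t, (sgn (s t (α t)) * u (α t))) * (∏ t, (sgn (s t (β t)) * v (β t)))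
        * (∏ t, (sgn (s t (γ t)) * u (γ t))) * (∏ t, (sgn (s t (δ t)) * v (δ t))))
        = ((∏ t, u (α t)) * (∏ t, v (β t)) * (∏ t, u (γ t)) * (∏ t, v (δ t)))
          * ∏ t, (if (α t = β t ∧ γ t = δ t) ∨ (α t = γ t ∧ β t = δ t)
              ∨ (α t = δ t ∧ β t = γ t)
            then (Fintype.card (Fin d → Bool) : ℝ) else 0) := by
      have h1 : ∀ s : Fin k → Fin d → Bool,
          (∏ t, (sgn (s t (α t)) * u (α t))) * (∏ t, (sgn (s t (β t)) * v (β t)))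
          * (∏ t, (sgn (s t (γ t)) * u (γ t))) * (∏ t, (sgn (s t (δ t)) * v (δ t)))
          = ((∏ t, u (α t)) * (∏ t, v (β t)) * (∏ t, u (γ t)) * (∏ t, v (δ t)))
            * ((∏ t, sgn (s t (α t))) * (∏ t, sgn (s t (β t)))
              * (∏ t, sgn (s t (γ t))) * (∏ t, sgn (s t (δ t)))) := by
        intro s
        rw [Finset.prod_mul_distrib, Finset.prod_mul_distrib,
          Finset.prod_mul_distrib, Finset.prod_mul_distrib]
        ring
      rw [Finset.sum_congr rfl (fun s _ => h1 s), ← Finset.mul_sum, sum_sigma_quad]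
      congr 1
      exact Finset.prod_congr rfl (fun t _ => sum_sgn_quad' (α t) (β t) (γ t) (δ t))
    rw [hsig]
    -- bound the hash part
    have hXnn : (0:ℝ) ≤ ∑ h : Fin k → Fin d → Fin mm,
        (if (∑ t, h t (α t)) = (∑ t, h t (β t)) then (1:ℝ) else 0)
        * (if (∑ t, h t (γ t)) = (∑ t, h t (δ t)) then (1:ℝ) else 0) := by
      apply Finset.sum_nonneg; intro h _; positivity
    have hXle : (∑ h : Fin k → Fin d → Fin mm,
        (if (∑ t, h t (α t)) = (∑ t, h t (β t)) then (1:ℝ) else 0)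
        * (if (∑ t, h t (γ t)) = (∑ t, h t (δ t)) then (1:ℝ) else 0))
        ≤ (Fintype.card (Fin k → Fin d → Fin mm) : ℝ) / mm := by
      rw [← sum_chi hne]
      apply Finset.sum_le_sum; intro h _
      have h1 : (0:ℝ) ≤ (if (∑ t, h t (α t)) = (∑ t, h t (β t)) then (1:ℝ) else 0) := by positivity
      have h2 : (if (∑ t, h t (γ t)) = (∑ t, h t (δ t)) then (1:ℝ) else 0) ≤ 1 := by
        split_ifs <;> norm_num
      exact mul_le_of_le_one_right h1 h2
    -- bound the weight by its absolute value times the nonneg product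
    have hFnn : (0:ℝ) ≤ ∏ t, (if (α t = β t ∧ γ t = δ t) ∨ (α t = γ t ∧ β t = δ t)
          ∨ (α t = δ t ∧ β t = γ t) then (Fintype.card (Fin d → Bool) : ℝ) else 0) := by
      apply Finset.prod_nonneg; intro t _; positivity
    have hWabs : ((∏ t, u (α t)) * (∏ t, v (β t)) * (∏ t, u (γ t)) * (∏ t, v (δ t)))
        * ∏ t, (if (α t = β t ∧ γ t = δ t) ∨ (α t = γ t ∧ β t = δ t)
            ∨ (α t = δ t ∧ β t = γ t) then (Fintype.card (Fin d → Bool) : ℝ) else 0)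
        ≤ ∏ t, w4 (α t) (β t) (γ t) (δ t) := by
      have habs : ∏ t, w4 (α t) (β t) (γ t) (δ t)
          = ((∏ t, |u (α t)|) * (∏ t, |v (β t)|) * (∏ t, |u (γ t)|) * (∏ t, |v (δ t)|))
            * ∏ t, (if (α t = β t ∧ γ t = δ t) ∨ (α t = γ t ∧ β t = δ t)
              ∨ (α t = δ t ∧ β t = γ t) then (Fintype.card (Fin d → Bool) : ℝ) else 0) := by
        rw [hw4, ← Finset.prod_mul_distrib, ← Finset.prod_mul_distrib,
          ← Finset.prod_mul_distrib, ← Finset.prod_mul_distrib]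
      rw [habs]
      apply mul_le_mul_of_nonneg_right _ hFnn
      calc (∏ t, u (α t)) * (∏ t, v (β t)) * (∏ t, u (γ t)) * (∏ t, v (δ t))
          ≤ |(∏ t, u (α t)) * (∏ t, v (β t)) * (∏ t, u (γ t)) * (∏ t, v (δ t))| := le_abs_self _
        _ = (∏ t, |u (α t)|) * (∏ t, |v (β t)|) * (∏ t, |u (γ t)|) * (∏ t, |v (δ t)|) := by
            rw [abs_mul, abs_mul, abs_mul, Finset.abs_prod, Finset.abs_prod,
              Finset.abs_prod, Finset.abs_prod]
    -- combine
    calc _ ≤ (∑ h : Fin k → Fin d → Fin mm,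
          (if (∑ t, h t (α t)) = (∑ t, h t (β t)) then (1:ℝ) else 0)
          * (if (∑ t, h t (γ t)) = (∑ t, h t (δ t)) then (1:ℝ) else 0))
          * ∏ t, w4 (α t) (β t) (γ t) (δ t) :=
        mul_le_mul_of_nonneg_left hWabs hXnn
      _ ≤ ((Fintype.card (Fin k → Fin d → Fin mm) : ℝ) / mm)
          * ∏ t, w4 (α t) (β t) (γ t) (δ t) := by
        apply mul_le_mul_of_nonneg_right hXle
        exact Finset.prod_nonneg (fun t _ => hw4nn _ _ _ _)
  -- Step 4: put it together
  have hbase_nn : (0:ℝ) ≤ ∑ a, ∑ b, ∑ c, ∑ e, w4 a b c e := by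
    apply Finset.sum_nonneg; intro a _
    apply Finset.sum_nonneg; intro b _
    apply Finset.sum_nonneg; intro c _
    apply Finset.sum_nonneg; intro e _
    exact hw4nn a b c e
  have hbase : (∑ a, ∑ b, ∑ c, ∑ e, w4 a b c e)
      ≤ (Fintype.card (Fin d → Bool) : ℝ)
        * (3 * ((∑ l, (u l)^2) * (∑ l, (v l)^2))) := by
    rw [hw4]
    exact base_bound u v _ (by positivity)
  have hW4nn : ∀ pr qr : (Fin k → Fin d) × (Fin k → Fin d),
      (0:ℝ) ≤ ((Fintype.card (Fin k → Fin d → Fin mm) : ℝ) / mm)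
        * ∏ t, w4 (pr.1 t) (pr.2 t) (qr.1 t) (qr.2 t) := by
    intro pr qr
    exact mul_nonneg CHpos (Finset.prod_nonneg (fun t _ => hw4nn _ _ _ _))
  have hCS : (Fintype.card (Fin k → Fin d → Bool) : ℝ)
      = (Fintype.card (Fin d → Bool) : ℝ) ^ k := by
    rw [Fintype.card_fun]
    simp
  calc ∑ h : Fin k → Fin d → Fin mm, ∑ s : Fin k → Fin d → Bool,
        ((∑ l, u l * v l) ^ k - ∑ q : Fin mm, tSketch k h s u q * tSketch k h s v q) ^ 2
      = ∑ h : Fin k → Fin d → Fin mm, ∑ s : Fin k → Fin d → Bool,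
          ∑ pr ∈ O, ∑ qr ∈ O, G h s pr * G h s qr :=
        Finset.sum_congr rfl (fun h _ => Finset.sum_congr rfl (fun s _ => hsq h s))
    _ = ∑ h : Fin k → Fin d → Fin mm, ∑ pr ∈ O, ∑ s : Fin k → Fin d → Bool,
          ∑ qr ∈ O, G h s pr * G h s qr :=
        Finset.sum_congr rfl (fun h _ => Finset.sum_comm)
    _ = ∑ pr ∈ O, ∑ h : Fin k → Fin d → Fin mm, ∑ s : Fin k → Fin d → Bool,
          ∑ qr ∈ O, G h s pr * G h s qr := Finset.sum_comm
    _ = ∑ pr ∈ O, ∑ h : Fin k → Fin d → Fin mm, ∑ qr ∈ O, ∑ s : Fin k → Fin d → Bool,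
          G h s pr * G h s qr :=
        Finset.sum_congr rfl (fun pr _ => Finset.sum_congr rfl
          (fun h _ => Finset.sum_comm))
    _ = ∑ pr ∈ O, ∑ qr ∈ O, ∑ h : Fin k → Fin d → Fin mm, ∑ s : Fin k → Fin d → Bool,
          G h s pr * G h s qr :=
        Finset.sum_congr rfl (fun pr _ => Finset.sum_comm)
    _ ≤ ∑ pr ∈ O, ∑ qr ∈ O, ((Fintype.card (Fin k → Fin d → Fin mm) : ℝ) / mm)
          * ∏ t, w4 (pr.1 t) (pr.2 t) (qr.1 t) (qr.2 t) :=
        Finset.sum_le_sum (fun pr hpr => Finset.sum_le_sum (fun qr hqr => hinner pr hpr qr hqr))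
    _ ≤ ∑ pr ∈ O, ∑ qr : (Fin k → Fin d) × (Fin k → Fin d),
          ((Fintype.card (Fin k → Fin d → Fin mm) : ℝ) / mm)
          * ∏ t, w4 (pr.1 t) (pr.2 t) (qr.1 t) (qr.2 t) :=
        Finset.sum_le_sum (fun pr _ => Finset.sum_le_sum_of_subset_of_nonneg
          (Finset.subset_univ O) (fun qr _ _ => hW4nn pr qr))
    _ ≤ ∑ pr : (Fin k → Fin d) × (Fin k → Fin d),
          ∑ qr : (Fin k → Fin d) × (Fin k → Fin d),
          ((Fintype.card (Fin k → Fin d → Fin mm) : ℝ) / mm)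
          * ∏ t, w4 (pr.1 t) (pr.2 t) (qr.1 t) (qr.2 t) :=
        Finset.sum_le_sum_of_subset_of_nonneg (Finset.subset_univ O)
          (fun pr _ _ => Finset.sum_nonneg (fun qr _ => hW4nn pr qr))
    _ = ((Fintype.card (Fin k → Fin d → Fin mm) : ℝ) / mm)
          * ∑ pr : (Fin k → Fin d) × (Fin k → Fin d),
            ∑ qr : (Fin k → Fin d) × (Fin k → Fin d),
            ∏ t, w4 (pr.1 t) (pr.2 t) (qr.1 t) (qr.2 t) := by
        simp only [← Finset.mul_sum]
    _ = ((Fintype.card (Fin k → Fin d → Fin mm) : ℝ) / mm)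
          * (∑ a, ∑ b, ∑ c, ∑ e, w4 a b c e) ^ k := by
        congr 1
        have e1 : ∑ pr : (Fin k → Fin d) × (Fin k → Fin d),
            ∑ qr : (Fin k → Fin d) × (Fin k → Fin d),
            ∏ t, w4 (pr.1 t) (pr.2 t) (qr.1 t) (qr.2 t)
            = ∑ α : Fin k → Fin d, ∑ β : Fin k → Fin d, ∑ γ : Fin k → Fin d,
              ∑ δ : Fin k → Fin d, ∏ t, w4 (α t) (β t) (γ t) (δ t) := by
          rw [Fintype.sum_prod_type]
          apply Finset.sum_congr rfl; intro α _
          apply Finset.sum_congr rfl; intro β _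
          rw [Fintype.sum_prod_type]
        rw [e1, sum4_prod]
    _ ≤ ((Fintype.card (Fin k → Fin d → Fin mm) : ℝ) / mm)
          * ((Fintype.card (Fin d → Bool) : ℝ)
            * (3 * ((∑ l, (u l)^2) * (∑ l, (v l)^2)))) ^ k :=
        mul_le_mul_of_nonneg_left (pow_le_pow_left₀ hbase_nn hbase k) CHpos
    _ = (Fintype.card (Fin k → Fin d → Fin mm) : ℝ)
          * (Fintype.card (Fin k → Fin d → Bool))
          * (3 ^ k * (∑ l, (u l)^2) ^ k * (∑ l, (v l)^2) ^ k) / mm := by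
        rw [hCS]
        ring

lemma pull_const_hs {A B : Type*} [Fintype A] [Fintype B] (k : ℝ) (F : A → B → ℝ) :
    ∑ a : A, ∑ b : B, k * F a b = k * ∑ a : A, ∑ b : B, F a b := by
  simp only [← Finset.mul_sum]

lemma swap_out {A B C : Type*} [Fintype A] [Fintype B] (t : Finset C) (F : C → A → B → ℝ) :
    ∑ a : A, ∑ b : B, ∑ x ∈ t, F x a b = ∑ x ∈ t, ∑ a : A, ∑ b : B, F x a b := by
  calc ∑ a : A, ∑ b : B, ∑ x ∈ t, F x a b
      = ∑ a : A, ∑ x ∈ t, ∑ b : B, F x a b :=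
        Finset.sum_congr rfl (fun a _ => Finset.sum_comm)
    _ = ∑ x ∈ t, ∑ a : A, ∑ b : B, F x a b := Finset.sum_comm

lemma swap_out' {A B C : Type*} [Fintype A] [Fintype B] [Fintype C] (F : A → B → C → ℝ) :
    ∑ a : A, ∑ b : B, ∑ x : C, F a b x = ∑ x : C, ∑ a : A, ∑ b : B, F a b x := by
  calc ∑ a : A, ∑ b : B, ∑ x : C, F a b x
      = ∑ a : A, ∑ x : C, ∑ b : B, F a b x :=
        Finset.sum_congr rfl (fun a _ => Finset.sum_comm)
    _ = ∑ x : C, ∑ a : A, ∑ b : B, F a b x := Finset.sum_comm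

lemma tSketch_zero {d mm : ℕ} [NeZero mm] (h : Fin 0 → Fin d → Fin mm)
    (s : Fin 0 → Fin d → Bool) (u : Fin d → ℝ) (q : Fin mm) :
    tSketch 0 h s u q = if (0 : Fin mm) = q then 1 else 0 := by
  unfold tSketch
  simp

lemma Yv_zero {d mm : ℕ} [NeZero mm] (h : Fin 0 → Fin d → Fin mm)
    (s : Fin 0 → Fin d → Bool) (u v : Fin d → ℝ) :
    ∑ q : Fin mm, tSketch 0 h s u q * tSketch 0 h s v q = 1 := by
  have : ∀ q : Fin mm, tSketch 0 h s u q * tSketch 0 h s v q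
      = (if (0:Fin mm) = q then (1:ℝ) else 0) * (if (0:Fin mm) = q then (1:ℝ) else 0) := by
    intro q; rw [tSketch_zero, tSketch_zero]
  rw [Finset.sum_congr rfl (fun q _ => this q), sum_ite_mul_ite]
  simp

lemma card_fun_split {A : Type*} [Fintype A] {r kk : ℕ} (hk : kk ≤ r) :
    (Fintype.card (Fin (r - kk) → A) : ℝ) * (Fintype.card (Fin kk → A) : ℝ)
    = (Fintype.card (Fin r → A) : ℝ) := by
  rw [Fintype.card_fun, Fintype.card_fun, Fintype.card_fun]
  push_cast
  rw [← pow_add]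
  congr 1
  simp [Nat.sub_add_cancel hk]

-- continuation fragment (appended later): main theorem
/-- **Regression upper bound on the Poly-TensorSketch error** (Lemma 2): for
every coefficient vector `c`,
`E ‖f⊙(UVᵀ) − Γ‖_F² ≤ 2 ‖X c − f⃗‖² + 2 ‖W c‖²`. -/
theorem polyTensorSketch_regression_bound {n d m r : ℕ} [NeZero m]
    (U V : Matrix (Fin n) (Fin d) ℝ) (f : ℝ → ℝ) (c : Fin (r + 1) → ℝ) :
    expHS (fun (h : Fin r → Fin d → Fin m) (s : Fin r → Fin d → Bool) =>
      frobSq ((Matrix.of fun i j => f ((U * Vᵀ) i j)) - ptsGamma r c h s U V))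
    ≤ 2 * vnormSq ((vand r U V).mulVec c - fvec f U V)
      + 2 * vnormSq ((Matrix.diagonal (wReg r m U V)).mulVec c) := by
  classical
  set NH : ℝ := (Fintype.card (Fin r → Fin d → Fin m) : ℝ) with hNH
  set NS : ℝ := (Fintype.card (Fin r → Fin d → Bool) : ℝ) with hNS
  have hNHpos : 0 < NH := by rw [hNH]; exact_mod_cast Fintype.card_pos
  have hNSpos : 0 < NS := by rw [hNS]; exact_mod_cast Fintype.card_pos
  have hmpos : (0:ℝ) < m := by exact_mod_cast Nat.pos_of_ne_zero (NeZero.ne m)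
  -- the degree-jj sketch inner product
  set Yv : Fin (r+1) → (Fin r → Fin d → Fin m) → (Fin r → Fin d → Bool) → Fin n → Fin n → ℝ :=
    fun jj h s i j => ∑ q : Fin m,
      tSketch (jj : ℕ)
        (fun t => h ⟨t.1, lt_of_lt_of_le t.2 (Nat.lt_succ_iff.mp jj.2)⟩)
        (fun t => s ⟨t.1, lt_of_lt_of_le t.2 (Nat.lt_succ_iff.mp jj.2)⟩) (U i) q
      * tSketch (jj : ℕ)
        (fun t => h ⟨t.1, lt_of_lt_of_le t.2 (Nat.lt_succ_iff.mp jj.2)⟩)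
        (fun t => s ⟨t.1, lt_of_lt_of_le t.2 (Nat.lt_succ_iff.mp jj.2)⟩) (V j) q with hYv
  set Ev : Fin (r+1) → (Fin r → Fin d → Fin m) → (Fin r → Fin d → Bool) → Fin n → Fin n → ℝ :=
    fun jj h s i j => ((U * Vᵀ) i j) ^ (jj : ℕ) - Yv jj h s i j with hEv
  set P : Fin n → Fin n → ℝ :=
    fun i j => ∑ jj : Fin (r+1), c jj * ((U * Vᵀ) i j) ^ (jj : ℕ) with hP
  -- entry of the gamma matrix
  have hGamma : ∀ h s (i j : Fin n),
      ((Matrix.of fun i j => f ((U * Vᵀ) i j)) - ptsGamma r c h s U V) i j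
      = (f ((U * Vᵀ) i j) - P i j) + ∑ jj : Fin (r+1), c jj * Ev jj h s i j := by
    intro h s i j
    have h1 : ptsGamma r c h s U V i j = ∑ jj : Fin (r+1), c jj * Yv jj h s i j := by
      rw [ptsGamma, Matrix.sum_apply]
      apply Finset.sum_congr rfl
      intro jj _
      rw [Matrix.smul_apply, smul_eq_mul, Matrix.mul_apply]
      rfl
    have h2 : ∑ jj : Fin (r+1), c jj * Ev jj h s i j
        = P i j - ∑ jj : Fin (r+1), c jj * Yv jj h s i j := by
      rw [hP, ← Finset.sum_sub_distrib]
      apply Finset.sum_congr rfl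
      intro jj _
      rw [hEv]
      ring
    rw [Matrix.sub_apply, Matrix.of_apply, h1, h2]
    ring
  -- Ev at jj = 0 vanishes
  have hE0 : ∀ h s (i j : Fin n), Ev 0 h s i j = 0 := by
    intro h s i j
    have h1 : Yv 0 h s i j = 1 := Yv_zero _ _ _ _
    rw [hEv]
    simp only [h1]
    norm_num
  -- the expectation of Ev² (marginalization + core)
  have hEsum : ∀ (jj : Fin (r+1)) (i j : Fin n),
      ∑ h : Fin r → Fin d → Fin m, ∑ s : Fin r → Fin d → Bool, (Ev jj h s i j)^2
      ≤ NH * NS * (3 ^ (jj:ℕ) * (∑ l, (U i l)^2) ^ (jj:ℕ) * (∑ l, (V j l)^2) ^ (jj:ℕ)) / m := by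
    intro jj i j
    have hk : (jj : ℕ) ≤ r := Nat.lt_succ_iff.mp jj.2
    set q : (Fin (jj:ℕ) → Fin d → Fin m) → (Fin (jj:ℕ) → Fin d → Bool) → ℝ :=
      fun h' s' => (((U * Vᵀ) i j) ^ (jj : ℕ)
        - ∑ qq : Fin m, tSketch (jj:ℕ) h' s' (U i) qq * tSketch (jj:ℕ) h' s' (V j) qq)^2
      with hq
    have step1 : ∑ h : Fin r → Fin d → Fin m, ∑ s : Fin r → Fin d → Bool, (Ev jj h s i j)^2
        = (Fintype.card (Fin (r - (jj:ℕ)) → Fin d → Bool) : ℝ)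
          * (Fintype.card (Fin (r - (jj:ℕ)) → Fin d → Fin m) : ℝ)
          * ∑ h' : Fin (jj:ℕ) → Fin d → Fin m, ∑ s' : Fin (jj:ℕ) → Fin d → Bool, q h' s' := by
      calc ∑ h : Fin r → Fin d → Fin m, ∑ s : Fin r → Fin d → Bool, (Ev jj h s i j)^2
          = ∑ h : Fin r → Fin d → Fin m,
            ((Fintype.card (Fin (r - (jj:ℕ)) → Fin d → Bool) : ℝ)
              * ∑ s' : Fin (jj:ℕ) → Fin d → Bool,
                q (fun t => h (Fin.castLE hk t)) s') := by
            apply Finset.sum_congr rfl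
            intro h _
            exact sum_prefix hk (fun s' => q (fun t => h (Fin.castLE hk t)) s')
        _ = (Fintype.card (Fin (r - (jj:ℕ)) → Fin d → Bool) : ℝ)
            * ∑ s' : Fin (jj:ℕ) → Fin d → Bool, ∑ h : Fin r → Fin d → Fin m,
              q (fun t => h (Fin.castLE hk t)) s' := by
            rw [← Finset.mul_sum, Finset.sum_comm]
        _ = (Fintype.card (Fin (r - (jj:ℕ)) → Fin d → Bool) : ℝ)
            * ∑ s' : Fin (jj:ℕ) → Fin d → Bool,
              ((Fintype.card (Fin (r - (jj:ℕ)) → Fin d → Fin m) : ℝ)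
                * ∑ h' : Fin (jj:ℕ) → Fin d → Fin m, q h' s') := by
            congr 1
            apply Finset.sum_congr rfl
            intro s' _
            exact sum_prefix hk (fun h' => q h' s')
        _ = _ := by
            rw [← Finset.mul_sum, Finset.sum_comm]
            ring
    rw [step1]
    have step2 : ∑ h' : Fin (jj:ℕ) → Fin d → Fin m, ∑ s' : Fin (jj:ℕ) → Fin d → Bool, q h' s'
        ≤ (Fintype.card (Fin (jj:ℕ) → Fin d → Fin m) : ℝ)
          * (Fintype.card (Fin (jj:ℕ) → Fin d → Bool))
          * (3 ^ (jj:ℕ) * (∑ l, (U i l)^2) ^ (jj:ℕ) * (∑ l, (V j l)^2) ^ (jj:ℕ)) / m := by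
      have hc := core (k := (jj:ℕ)) (d := d) (mm := m) (U i) (V j)
      have hpow : (∑ l, U i l * V j l) ^ (jj:ℕ) = ((U * Vᵀ) i j) ^ (jj:ℕ) := by
        rw [Matrix.mul_apply]
        rfl
      rw [hpow] at hc
      exact hc
    calc _ ≤ (Fintype.card (Fin (r - (jj:ℕ)) → Fin d → Bool) : ℝ)
          * (Fintype.card (Fin (r - (jj:ℕ)) → Fin d → Fin m) : ℝ)
          * ((Fintype.card (Fin (jj:ℕ) → Fin d → Fin m) : ℝ)
            * (Fintype.card (Fin (jj:ℕ) → Fin d → Bool))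
            * (3 ^ (jj:ℕ) * (∑ l, (U i l)^2) ^ (jj:ℕ) * (∑ l, (V j l)^2) ^ (jj:ℕ)) / m) := by
          apply mul_le_mul_of_nonneg_left step2
          positivity
      _ = NH * NS * (3 ^ (jj:ℕ) * (∑ l, (U i l)^2) ^ (jj:ℕ) * (∑ l, (V j l)^2) ^ (jj:ℕ)) / m := by
          rw [hNH, hNS, ← card_fun_split (A := Fin d → Fin m) hk,
            ← card_fun_split (A := Fin d → Bool) hk]
          ring
  
  -- pointwise quadratic bound
  have hpoint : ∀ (i j : Fin n) (h : Fin r → Fin d → Fin m) (s : Fin r → Fin d → Bool),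
      (((Matrix.of fun i j => f ((U * Vᵀ) i j)) - ptsGamma r c h s U V) i j)^2
      ≤ 2 * (f ((U * Vᵀ) i j) - P i j)^2
        + 2 * ((r:ℝ) * ∑ jj ∈ Finset.univ.erase (0 : Fin (r+1)),
            (c jj)^2 * (Ev jj h s i j)^2) := by
    intro i j h s
    rw [hGamma h s i j]
    have hb' : (∑ jj : Fin (r+1), c jj * Ev jj h s i j)
        = ∑ jj ∈ Finset.univ.erase (0 : Fin (r+1)), c jj * Ev jj h s i j :=
      (Finset.sum_erase _ (by rw [hE0]; ring)).symm
    have hcs := Finset.sum_mul_sq_le_sq_mul_sq (Finset.univ.erase (0 : Fin (r+1)))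
      (fun _ => (1:ℝ)) (fun jj => c jj * Ev jj h s i j)
    have hcard : (∑ _jj ∈ Finset.univ.erase (0 : Fin (r+1)), (1:ℝ)^2) = r := by
      rw [Finset.sum_const]
      simp [Finset.card_erase_of_mem]
    have h1 : (∑ jj : Fin (r+1), c jj * Ev jj h s i j)^2
        ≤ (r:ℝ) * ∑ jj ∈ Finset.univ.erase (0 : Fin (r+1)), (c jj)^2 * (Ev jj h s i j)^2 := by
      rw [hb']
      have e1 : (∑ jj ∈ Finset.univ.erase (0 : Fin (r+1)), c jj * Ev jj h s i j)
          = ∑ jj ∈ Finset.univ.erase (0 : Fin (r+1)), 1 * (c jj * Ev jj h s i j) := by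
        simp
      have e2 : (∑ jj ∈ Finset.univ.erase (0 : Fin (r+1)), (c jj * Ev jj h s i j)^2)
          = ∑ jj ∈ Finset.univ.erase (0 : Fin (r+1)), (c jj)^2 * (Ev jj h s i j)^2 := by
        exact Finset.sum_congr rfl (fun jj _ => by ring)
      calc (∑ jj ∈ Finset.univ.erase (0 : Fin (r+1)), c jj * Ev jj h s i j)^2
          = (∑ jj ∈ Finset.univ.erase (0 : Fin (r+1)), 1 * (c jj * Ev jj h s i j))^2 := by
            rw [← e1]
        _ ≤ (∑ _jj ∈ Finset.univ.erase (0 : Fin (r+1)), (1:ℝ)^2)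
            * ∑ jj ∈ Finset.univ.erase (0 : Fin (r+1)), (c jj * Ev jj h s i j)^2 := hcs
        _ = (r:ℝ) * ∑ jj ∈ Finset.univ.erase (0 : Fin (r+1)),
              (c jj)^2 * (Ev jj h s i j)^2 := by rw [hcard, e2]
    nlinarith [sq_nonneg ((f ((U * Vᵀ) i j) - P i j) - ∑ jj : Fin (r+1), c jj * Ev jj h s i j), h1]
  -- the summed per-entry bound
  have key : ∀ (i j : Fin n),
      ∑ h : Fin r → Fin d → Fin m, ∑ s : Fin r → Fin d → Bool,
        (((Matrix.of fun i j => f ((U * Vᵀ) i j)) - ptsGamma r c h s U V) i j)^2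
      ≤ NH * NS * 2 * (f ((U * Vᵀ) i j) - P i j)^2
        + ∑ jj ∈ Finset.univ.erase (0 : Fin (r+1)),
            (2 * (r:ℝ) * (c jj)^2) * (NH * NS * (3 ^ (jj:ℕ) * (∑ l, (U i l)^2) ^ (jj:ℕ)
              * (∑ l, (V j l)^2) ^ (jj:ℕ)) / m) := by
    intro i j
    calc ∑ h : Fin r → Fin d → Fin m, ∑ s : Fin r → Fin d → Bool,
          (((Matrix.of fun i j => f ((U * Vᵀ) i j)) - ptsGamma r c h s U V) i j)^2
        ≤ ∑ h : Fin r → Fin d → Fin m, ∑ s : Fin r → Fin d → Bool,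
          (2 * (f ((U * Vᵀ) i j) - P i j)^2
            + ∑ jj ∈ Finset.univ.erase (0 : Fin (r+1)),
              (2 * (r:ℝ) * (c jj)^2) * (Ev jj h s i j)^2) := by
          apply Finset.sum_le_sum; intro h _
          apply Finset.sum_le_sum; intro s _
          refine le_trans (hpoint i j h s) (le_of_eq ?_)
          rw [Finset.mul_sum, Finset.mul_sum]
          congr 1
          exact Finset.sum_congr rfl (fun jj _ => by ring)
      _ = NH * NS * 2 * (f ((U * Vᵀ) i j) - P i j)^2
          + ∑ jj ∈ Finset.univ.erase (0 : Fin (r+1)),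
            (2 * (r:ℝ) * (c jj)^2) * (∑ h : Fin r → Fin d → Fin m,
              ∑ s : Fin r → Fin d → Bool, (Ev jj h s i j)^2) := by
          rw [Finset.sum_congr rfl
            (fun (h : Fin r → Fin d → Fin m) _ => Finset.sum_add_distrib),
            Finset.sum_add_distrib]
          congr 1
          · rw [Finset.sum_congr rfl (fun (h : Fin r → Fin d → Fin m) _ =>
              Finset.sum_const (2 * (f ((U * Vᵀ) i j) - P i j)^2)), Finset.sum_const]
            simp only [Finset.card_univ, nsmul_eq_mul]
            rw [hNH, hNS]
            ring
          · rw [swap_out]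
            apply Finset.sum_congr rfl
            intro jj _
            rw [pull_const_hs]
      _ ≤ _ := by
          apply add_le_add_right
          apply Finset.sum_le_sum
          intro jj _
          exact mul_le_mul_of_nonneg_left (hEsum jj i j) (by positivity)
  
  -- translate the two vnormSq quantities
  have hv1 : vnormSq ((vand r U V).mulVec c - fvec f U V)
      = ∑ i : Fin n, ∑ j : Fin n, (f ((U * Vᵀ) i j) - P i j)^2 := by
    rw [vnormSq, Fintype.sum_prod_type]
    apply Finset.sum_congr rfl; intro i _
    apply Finset.sum_congr rfl; intro j _
    have e1 : ((vand r U V).mulVec c - fvec f U V) (i, j)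
        = P i j - f ((U * Vᵀ) i j) := by
      rw [Pi.sub_apply]
      rw [hP]
      simp only [Matrix.mulVec, dotProduct, vand, fvec, Matrix.of_apply]
      congr 1
      exact Finset.sum_congr rfl (fun jj _ => by ring)
    rw [e1]
    ring
  have hv2 : vnormSq ((Matrix.diagonal (wReg r m U V)).mulVec c)
      = ∑ jj : Fin (r+1), (wReg r m U V jj * c jj)^2 := by
    rw [vnormSq]
    apply Finset.sum_congr rfl; intro jj _
    rw [Matrix.mulVec_diagonal]
  -- per-jj comparison with the regularizer
  have hterm : ∀ jj ∈ Finset.univ.erase (0 : Fin (r+1)),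
      (2 * (r:ℝ) * (c jj)^2) * (NH * NS * (3 ^ (jj:ℕ)
        * (∑ i, (∑ l, (U i l)^2) ^ (jj:ℕ)) * (∑ j, (∑ l, (V j l)^2) ^ (jj:ℕ))) / m)
      ≤ NH * NS * (2 * (wReg r m U V jj * c jj)^2) := by
    intro jj hjj
    have hjj0 : ¬ ((jj : ℕ) = 0) := by
      intro hc
      exact (Finset.mem_erase.mp hjj).1 (Fin.ext (by simp [hc]))
    have hwv : wReg r m U V jj = Real.sqrt ((r : ℝ) * (2 + 3 ^ (jj : ℕ))
        * (∑ i, (∑ l, (U i l) ^ 2) ^ (jj : ℕ))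
        * (∑ i, (∑ l, (V i l) ^ 2) ^ (jj : ℕ)) / m) := by
      rw [wReg]
      simp only [hjj0, if_false]
    have harg : (0:ℝ) ≤ (r : ℝ) * (2 + 3 ^ (jj : ℕ))
        * (∑ i, (∑ l, (U i l) ^ 2) ^ (jj : ℕ))
        * (∑ i, (∑ l, (V i l) ^ 2) ^ (jj : ℕ)) / m := by positivity
    have hsq : (wReg r m U V jj)^2 = (r : ℝ) * (2 + 3 ^ (jj : ℕ))
        * (∑ i, (∑ l, (U i l) ^ 2) ^ (jj : ℕ))
        * (∑ i, (∑ l, (V i l) ^ 2) ^ (jj : ℕ)) / m := by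
      rw [hwv, Real.sq_sqrt harg]
    have h3 : (3:ℝ)^(jj:ℕ) ≤ 2 + 3^(jj:ℕ) := by linarith
    have hA : (0:ℝ) ≤ 2 * (r:ℝ) * (c jj)^2 * NH * NS
        * (∑ i, (∑ l, (U i l)^2) ^ (jj:ℕ)) * (∑ j, (∑ l, (V j l)^2) ^ (jj:ℕ)) / m := by
      have hSu : (0:ℝ) ≤ ∑ i, (∑ l, (U i l)^2) ^ (jj:ℕ) := by positivity
      have hSv : (0:ℝ) ≤ ∑ j, (∑ l, (V j l)^2) ^ (jj:ℕ) := by positivity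
      have : (0:ℝ) ≤ NH := le_of_lt hNHpos
      have : (0:ℝ) ≤ NS := le_of_lt hNSpos
      positivity
    calc (2 * (r:ℝ) * (c jj)^2) * (NH * NS * (3 ^ (jj:ℕ)
          * (∑ i, (∑ l, (U i l)^2) ^ (jj:ℕ)) * (∑ j, (∑ l, (V j l)^2) ^ (jj:ℕ))) / m)
        = (2 * (r:ℝ) * (c jj)^2 * NH * NS
            * (∑ i, (∑ l, (U i l)^2) ^ (jj:ℕ)) * (∑ j, (∑ l, (V j l)^2) ^ (jj:ℕ)) / m)
          * (3 ^ (jj:ℕ)) := by ring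
      _ ≤ (2 * (r:ℝ) * (c jj)^2 * NH * NS
            * (∑ i, (∑ l, (U i l)^2) ^ (jj:ℕ)) * (∑ j, (∑ l, (V j l)^2) ^ (jj:ℕ)) / m)
          * (2 + 3 ^ (jj:ℕ)) := mul_le_mul_of_nonneg_left h3 hA
      _ = NH * NS * (2 * (wReg r m U V jj * c jj)^2) := by
          rw [mul_pow, hsq]
          ring
  -- final assembly
  have hden : (0:ℝ) < (Fintype.card (Fin r → Fin d → Fin m) : ℝ)
      * (Fintype.card (Fin r → Fin d → Bool) : ℝ) := mul_pos hNHpos hNSpos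
  rw [expHS, div_le_iff₀ hden]
  calc ∑ h : Fin r → Fin d → Fin m, ∑ s : Fin r → Fin d → Bool,
        frobSq ((Matrix.of fun i j => f ((U * Vᵀ) i j)) - ptsGamma r c h s U V)
      = ∑ i : Fin n, ∑ j : Fin n, ∑ h : Fin r → Fin d → Fin m, ∑ s : Fin r → Fin d → Bool,
          (((Matrix.of fun i j => f ((U * Vᵀ) i j)) - ptsGamma r c h s U V) i j)^2 := by
        simp only [frobSq]
        rw [swap_out' ]
        apply Finset.sum_congr rfl; intro i _
        rw [swap_out']
    _ ≤ ∑ i : Fin n, ∑ j : Fin n,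
          (NH * NS * 2 * (f ((U * Vᵀ) i j) - P i j)^2
          + ∑ jj ∈ Finset.univ.erase (0 : Fin (r+1)),
            (2 * (r:ℝ) * (c jj)^2) * (NH * NS * (3 ^ (jj:ℕ) * (∑ l, (U i l)^2) ^ (jj:ℕ)
              * (∑ l, (V j l)^2) ^ (jj:ℕ)) / m)) :=
        Finset.sum_le_sum (fun i _ => Finset.sum_le_sum (fun j _ => key i j))
    _ = NH * NS * 2 * (∑ i : Fin n, ∑ j : Fin n, (f ((U * Vᵀ) i j) - P i j)^2)
        + ∑ jj ∈ Finset.univ.erase (0 : Fin (r+1)),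
            (2 * (r:ℝ) * (c jj)^2) * (NH * NS * (3 ^ (jj:ℕ)
              * (∑ i, (∑ l, (U i l)^2) ^ (jj:ℕ)) * (∑ j, (∑ l, (V j l)^2) ^ (jj:ℕ))) / m) := by
        rw [Finset.sum_congr rfl (fun (i : Fin n) _ => Finset.sum_add_distrib),
          Finset.sum_add_distrib]
        congr 1
        · rw [pull_const_hs]
        · rw [swap_out]
          apply Finset.sum_congr rfl
          intro jj _
          have e1 : ∀ (i j : Fin n),
              (2 * (r:ℝ) * (c jj)^2) * (NH * NS * (3 ^ (jj:ℕ) * (∑ l, (U i l)^2) ^ (jj:ℕ)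
                * (∑ l, (V j l)^2) ^ (jj:ℕ)) / m)
              = (2 * (r:ℝ) * (c jj)^2 * NH * NS * 3 ^ (jj:ℕ) / m)
                * ((∑ l, (U i l)^2) ^ (jj:ℕ) * (∑ l, (V j l)^2) ^ (jj:ℕ)) := by
            intro i j; ring
          rw [Finset.sum_congr rfl (fun (i : Fin n) _ => Finset.sum_congr rfl
            (fun (j : Fin n) _ => e1 i j))]
          rw [pull_const_hs]
          rw [← Finset.sum_mul_sum]
          ring
    _ ≤ NH * NS * 2 * (∑ i : Fin n, ∑ j : Fin n, (f ((U * Vᵀ) i j) - P i j)^2)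
        + ∑ jj ∈ Finset.univ.erase (0 : Fin (r+1)),
            NH * NS * (2 * (wReg r m U V jj * c jj)^2) :=
        add_le_add_right (Finset.sum_le_sum hterm) _
    _ ≤ NH * NS * 2 * (∑ i : Fin n, ∑ j : Fin n, (f ((U * Vᵀ) i j) - P i j)^2)
        + ∑ jj : Fin (r+1), NH * NS * (2 * (wReg r m U V jj * c jj)^2) := by
        apply add_le_add_right
        apply Finset.sum_le_sum_of_subset_of_nonneg (Finset.erase_subset _ _)
        intro jj _ _
        have h0 : (0:ℝ) ≤ NH := le_of_lt hNHpos
        have h1 : (0:ℝ) ≤ NS := le_of_lt hNSpos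
        positivity
    _ = (2 * vnormSq ((vand r U V).mulVec c - fvec f U V)
        + 2 * vnormSq ((Matrix.diagonal (wReg r m U V)).mulVec c))
        * ((Fintype.card (Fin r → Fin d → Fin m) : ℝ)
          * (Fintype.card (Fin r → Fin d → Bool) : ℝ)) := by
        rw [Finset.sum_congr rfl (fun (jj : Fin (r+1)) _ =>
          (show NH * NS * (2 * (wReg r m U V jj * c jj)^2)
            = (NH * NS * 2) * (wReg r m U V jj * c jj)^2 by ring))]
        rw [← Finset.mul_sum, ← hv1, ← hv2, hNH, hNS]
        ring
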